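/- arXiv:2003.07503 — 3 statements merged into one kernel-verified Lean document; each statement's English description precedes it below -/
import Mathlib

section
/- Let f : 2^N → ℝ be a subadditive set function on a finite ground set N (i.e., f(A ∪ B) ≤ f(A) + f(B) for all A, B ⊆ N). If X is a random subset of N in which each element is included independently with probability 1/2, then E[f(X)] ≥ (1/2)·f(N). -/
/-- Subadditive sampling lemma: for a subadditive set function `f` on a finite
ground set, the expectation of `f` over a uniformly random subset (each element
included independently with probability 1/2, so each subset has probability
`2^{-|N|}`) is at least half of `f(N)`. -/
theorem subadditive_sampling {N : Type*} [Fintype N] [DecidableEq N]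
    (f : Finset N → ℝ)
    (hsub : ∀ A B : Finset N, f (A ∪ B) ≤ f A + f B) :
    (1 / 2) * f Finset.univ ≤
      ∑ A ∈ (Finset.univ : Finset N).powerset,
        ((1 : ℝ) / 2 ^ (Fintype.card N)) * f A := by
  set P := (Finset.univ : Finset N).powerset
  have hcompl : ∑ A ∈ P, f Aᶜ = ∑ A ∈ P, f A := by
    apply Finset.sum_nbij' (fun A => Aᶜ) (fun A => Aᶜ) <;>
      simp [P, compl_compl]
  have key : (2 ^ Fintype.card N : ℝ) * f Finset.univ ≤ 2 * ∑ A ∈ P, f A := by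
    have h1 : ∀ A ∈ P, f Finset.univ ≤ f A + f Aᶜ := by
      intro A _
      have := hsub A Aᶜ
      simpa [Finset.union_compl] using this
    calc (2 ^ Fintype.card N : ℝ) * f Finset.univ
        = ∑ _A ∈ P, f Finset.univ := by
          simp [P, Finset.card_powerset, mul_comm]
      _ ≤ ∑ A ∈ P, (f A + f Aᶜ) := Finset.sum_le_sum h1
      _ = 2 * ∑ A ∈ P, f A := by
          rw [Finset.sum_add_distrib, hcompl]; ring
  have h2 : (0:ℝ) < 2 ^ Fintype.card N := by positivity
  rw [← Finset.mul_sum]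
  rw [one_div, one_div, inv_mul_eq_div, inv_mul_eq_div, div_le_div_iff₀ two_pos h2]
  nlinarith [key]
end

section
/- Fix a buyer value v_b ≥ 0 and a tentative price p_b with v_b ≥ p_b. Let v_s, v_s' be i.i.d. nonnegative random variables with CDF F. Then the expected contribution E[v_b·1{trade} + v_s·1{no trade}] ≥ (2 − √3)·v_b, where 'trade' is the event {v_s' ≤ v_b and v_s ≤ max(p_b, v_s')}. -/
open MeasureTheory
open scoped Classical

/-- Expected contribution of a buyer-seller pair in Reserve Rehearsal: with
`0 ≤ p_b ≤ v_b` and i.i.d. nonnegative integrable seller values `v_s, v_s'`,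
the expectation of (`v_b` if trade, else `v_s`) is at least `(2 − √3)·v_b`,
where trade is the event `{v_s' ≤ v_b and v_s ≤ max(p_b, v_s')}`. -/
theorem trade_contribution {Ω : Type*} [MeasurableSpace Ω]
    (μ : Measure Ω) [IsProbabilityMeasure μ]
    (vs vs' : Ω → ℝ) (hm : Measurable vs) (hm' : Measurable vs')
    (hindep : ProbabilityTheory.IndepFun vs vs' μ)
    (hid : Measure.map vs μ = Measure.map vs' μ)
    (hnonneg : ∀ ω, 0 ≤ vs ω) (hnonneg' : ∀ ω, 0 ≤ vs' ω)
    (hint : Integrable vs μ) (hint' : Integrable vs' μ)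
    (vb pb : ℝ) (hpb : 0 ≤ pb) (hpbvb : pb ≤ vb) :
    (2 - Real.sqrt 3) * vb ≤
      ∫ ω, (if vs' ω ≤ vb ∧ vs ω ≤ max pb (vs' ω) then vb else vs ω) ∂μ := by
  have hvb : 0 ≤ vb := le_trans hpb hpbvb
  set g : Ω → ℝ := fun ω => if vs' ω ≤ vb ∧ vs ω ≤ max pb (vs' ω) then vb else vs ω with hg
  have hsqrt3 : (Real.sqrt 3) ^ 2 = 3 := Real.sq_sqrt (by norm_num)
  have hsqrt3_nn : 0 ≤ Real.sqrt 3 := Real.sqrt_nonneg 3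
  have hsqrt1 : 1 ≤ Real.sqrt 3 := by nlinarith
  -- measurability of the trade event
  have hT : MeasurableSet {ω | vs' ω ≤ vb ∧ vs ω ≤ max pb (vs' ω)} := by
    have h1 : MeasurableSet {ω | vs' ω ≤ vb} := measurableSet_le hm' measurable_const
    have h2 : MeasurableSet {ω | vs ω ≤ max pb (vs' ω)} :=
      measurableSet_le hm (measurable_const.max hm')
    exact h1.inter h2
  have hgmeas : Measurable g := Measurable.ite hT measurable_const hm
  have hg0 : ∀ ω, 0 ≤ g ω := by
    intro ω; simp only [hg]; split_ifs
    · exact hvb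
    · exact hnonneg ω
  have hgint : Integrable g μ := by
    refine Integrable.mono' (hint.add (integrable_const vb)) hgmeas.aestronglyMeasurable
      (ae_of_all _ fun ω => ?_)
    rw [Real.norm_eq_abs, abs_of_nonneg (hg0 ω)]
    simp only [hg, Pi.add_apply]
    split_ifs
    · have := hnonneg ω; linarith
    · linarith
  -- key lower-bound tool
  have key : ∀ S : Set Ω, MeasurableSet S → (∀ ω ∈ S, vb ≤ g ω) →
      vb * (μ S).toReal ≤ ∫ ω, g ω ∂μ := by
    intro S hS hle
    have hind : ∀ ω, S.indicator (fun _ => vb) ω ≤ g ω := by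
      intro ω
      by_cases hω : ω ∈ S
      · rw [Set.indicator_of_mem hω]; exact hle ω hω
      · rw [Set.indicator_of_notMem hω]; exact hg0 ω
    have hintind : Integrable (S.indicator fun _ : Ω => vb) μ :=
      (integrable_const vb).indicator hS
    have := integral_mono hintind hgint hind
    rwa [integral_indicator_const _ hS, smul_eq_mul, mul_comm] at this
  -- distributions
  set ν : Measure ℝ := Measure.map vs μ with hν
  have hνprob : IsProbabilityMeasure ν := Measure.isProbabilityMeasure_map hm.aemeasurable
  have hmap : Measure.map (fun ω => (vs ω, vs' ω)) μ = ν.prod ν := by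
    rw [(ProbabilityTheory.indepFun_iff_map_prod_eq_prod_map_map hm.aemeasurable
      hm'.aemeasurable).mp hindep, ← hid]
  -- sets
  set A : Set Ω := {ω | vs ω ≤ vs' ω ∧ vs' ω ≤ vb} with hA
  set B : Set Ω := {ω | vs' ω ≤ vs ω ∧ vs ω ≤ vb} with hB
  have hAmeas : MeasurableSet A := (measurableSet_le hm hm').inter (measurableSet_le hm' measurable_const)
  have hBmeas : MeasurableSet B := (measurableSet_le hm' hm).inter (measurableSet_le hm measurable_const)
  -- exchangeability: μ A = μ B
  have hpairmeas : Measurable (fun ω => (vs ω, vs' ω)) := hm.prodMk hm'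
  set S₁ : Set (ℝ × ℝ) := {p | p.1 ≤ p.2 ∧ p.2 ≤ vb} with hS₁
  have hS₁meas : MeasurableSet S₁ :=
    (measurableSet_le measurable_fst measurable_snd).inter
      (measurableSet_le measurable_snd measurable_const)
  have hswap : Prod.swap ⁻¹' S₁ = {p : ℝ × ℝ | p.2 ≤ p.1 ∧ p.1 ≤ vb} := by
    ext p; simp [hS₁, Prod.swap]
  have hμA : μ A = (ν.prod ν) S₁ := by
    rw [← hmap, Measure.map_apply hpairmeas hS₁meas]; rfl
  have hμB : μ B = (ν.prod ν) (Prod.swap ⁻¹' S₁) := by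
    rw [← hmap, Measure.map_apply hpairmeas (measurable_swap hS₁meas), hswap]; rfl
  have hAB : μ A = μ B := by
    rw [hμA, hμB, ← Measure.map_apply measurable_swap hS₁meas, Measure.prod_swap]
  -- independence product formula
  set C : Set Ω := {ω | vs ω ≤ vb} ∩ {ω | vs' ω ≤ vb} with hC
  have hCab : μ C = μ {ω | vs ω ≤ vb} * μ {ω | vs' ω ≤ vb} := by
    have := hindep.measure_inter_preimage_eq_mul (Set.Iic vb) (Set.Iic vb)
      measurableSet_Iic measurableSet_Iic
    exact this
  have hsame : μ {ω | vs' ω ≤ vb} = μ {ω | vs ω ≤ vb} := by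
    have h1 : μ {ω | vs ω ≤ vb} = (Measure.map vs μ) (Set.Iic vb) := by
      rw [Measure.map_apply hm measurableSet_Iic]; rfl
    have h2 : μ {ω | vs' ω ≤ vb} = (Measure.map vs' μ) (Set.Iic vb) := by
      rw [Measure.map_apply hm' measurableSet_Iic]; rfl
    rw [h1, h2, ← hid, hν]
  have hCsub : C ⊆ A ∪ B := by
    intro ω hω
    rcases le_total (vs ω) (vs' ω) with h | h
    · exact Or.inl ⟨h, hω.2⟩
    · exact Or.inr ⟨h, hω.1⟩
  -- real-valued quantities
  set a : ℝ := (μ {ω | vs ω ≤ vb}).toReal with ha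
  have ha0 : 0 ≤ a := ENNReal.toReal_nonneg
  have ha1 : a ≤ 1 := by
    rw [ha]
    have := prob_le_one (μ := μ) (s := {ω | vs ω ≤ vb})
    exact ENNReal.toReal_le_of_le_ofReal (by norm_num) (by simpa using this)
  have hCtoReal : (μ C).toReal = a * a := by
    rw [hCab, hsame, ENNReal.toReal_mul]
  have hClesum : (μ C).toReal ≤ 2 * (μ A).toReal := by
    have h1 : μ C ≤ μ A + μ B := le_trans (measure_mono hCsub) (measure_union_le A B)
    have h2 : μ C ≤ 2 * μ A := by rw [two_mul, ← hAB] at *; exact h1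
    have hfin : (2 : ENNReal) * μ A ≠ ⊤ := by
      refine ENNReal.mul_ne_top (by norm_num) (measure_ne_top μ A)
    calc (μ C).toReal ≤ ((2 : ENNReal) * μ A).toReal := ENNReal.toReal_mono hfin h2
      _ = 2 * (μ A).toReal := by rw [ENNReal.toReal_mul]; norm_num
  by_cases hcase : Real.sqrt 3 - 1 ≤ a
  · -- trade happens often
    have hAok : ∀ ω ∈ A, vb ≤ g ω := by
      intro ω hω
      have hcond : vs' ω ≤ vb ∧ vs ω ≤ max pb (vs' ω) :=
        ⟨hω.2, le_trans hω.1 (le_max_right _ _)⟩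
      simp only [hg, if_pos hcond]
      exact le_rfl
    have hAlb : 2 - Real.sqrt 3 ≤ (μ A).toReal := by
      have : a * a ≤ 2 * (μ A).toReal := by rw [← hCtoReal]; exact hClesum
      nlinarith
    calc (2 - Real.sqrt 3) * vb ≤ (μ A).toReal * vb := by
          apply mul_le_mul_of_nonneg_right hAlb hvb
      _ = vb * (μ A).toReal := mul_comm _ _
      _ ≤ ∫ ω, g ω ∂μ := key A hAmeas hAok
  · -- no-trade side makes the payoff large
    push_neg at hcase
    set D : Set Ω := {ω | vs ω ≤ vb}ᶜ with hD
    have hDmeas : MeasurableSet D := (measurableSet_le hm measurable_const).compl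
    have hDval : (μ D).toReal = 1 - a := by
      have hle1 : μ {ω | vs ω ≤ vb} ≤ 1 := prob_le_one
      rw [hD, prob_compl_eq_one_sub (measurableSet_le hm measurable_const),
        ENNReal.toReal_sub_of_le hle1 ENNReal.one_ne_top, ENNReal.toReal_one]
    have hDok : ∀ ω ∈ D, vb ≤ g ω := by
      intro ω hω
      have hvsω : vb < vs ω := by
        simpa [hD, not_le] using hω
      simp only [hg]
      split_ifs
      · exact le_refl vb
      · exact le_of_lt hvsω
    calc (2 - Real.sqrt 3) * vb ≤ (1 - a) * vb := by
          apply mul_le_mul_of_nonneg_right (by linarith) hvb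
      _ = vb * (μ D).toReal := by rw [hDval, mul_comm]
      _ ≤ ∫ ω, g ω ∂μ := key D hDmeas hDok
end

section
/- OPT versus adjusted OPT (deterministic version): let B be a finite set of buyers each assigned a disjoint set S_b of sellers, with values v_b(S_b) ≥ 0, seller values v_s ≥ 0 and samples v'_s ≥ 0. Define T_b = v_b(S_b) − Σ_{s∈S_b} v_s and T̂_b = v_b(S_b) − Σ_{s∈S_b} max(v_s, v'_s). Then there exists a sub-allocation (keeping only buyers with T̂_b > 0) whose adjusted surplus satisfies Σ_b T̂_b(restricted) ≥ Σ_b T_b − Σ_{s} (v'_s − v_s)₊, where the last sum is over all sellers. -/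
open scoped Classical

/-- OPT versus adjusted OPT (deterministic version): restricting an allocation
to the buyers with positive adjusted surplus loses at most
`Σ_s (v'_s − v_s)₊` compared with the original surplus. -/
theorem opt_vs_adjusted_opt {B S : Type*} [Fintype B] [Fintype S] [DecidableEq S]
    (Sb : B → Finset S) (hdisj : ∀ b b' : B, b ≠ b' → Disjoint (Sb b) (Sb b'))
    (vb : B → ℝ) (vs vs' : S → ℝ)
    (hvb : ∀ b, 0 ≤ vb b) (hvs : ∀ s, 0 ≤ vs s) (hvs' : ∀ s, 0 ≤ vs' s) :
    (∑ b : B, (vb b - ∑ s ∈ Sb b, vs s)) - ∑ s : S, max (vs' s - vs s) 0 ≤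
      ∑ b ∈ Finset.univ.filter
          (fun b => ∑ s ∈ Sb b, max (vs s) (vs' s) < vb b),
        (vb b - ∑ s ∈ Sb b, max (vs s) (vs' s)) := by
  have key : ∑ b : B, ∑ s ∈ Sb b, (max (vs s) (vs' s) - vs s)
      ≤ ∑ s : S, max (vs' s - vs s) 0 := by
    have h1 : ∑ b : B, ∑ s ∈ Sb b, (max (vs s) (vs' s) - vs s)
        = ∑ s ∈ Finset.univ.biUnion Sb, (max (vs s) (vs' s) - vs s) := by
      rw [Finset.sum_biUnion]
      intro b _ b' _ hbb'
      exact hdisj b b' hbb'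
    rw [h1]
    have h2 : ∀ s : S, max (vs s) (vs' s) - vs s = max (vs' s - vs s) 0 := by
      intro s
      rcases le_total (vs s) (vs' s) with h | h
      · rw [max_eq_right h, max_eq_left (by linarith)]
      · rw [max_eq_left h, max_eq_right (by linarith), sub_self]
    calc ∑ s ∈ Finset.univ.biUnion Sb, (max (vs s) (vs' s) - vs s)
        = ∑ s ∈ Finset.univ.biUnion Sb, max (vs' s - vs s) 0 := by
          exact Finset.sum_congr rfl (fun s _ => h2 s)
      _ ≤ ∑ s : S, max (vs' s - vs s) 0 :=
          Finset.sum_le_sum_of_subset_of_nonneg (Finset.subset_univ _)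
            (fun s _ _ => le_max_right _ _)
  have step1 : (∑ b : B, (vb b - ∑ s ∈ Sb b, vs s)) - ∑ s : S, max (vs' s - vs s) 0
      ≤ ∑ b : B, (vb b - ∑ s ∈ Sb b, max (vs s) (vs' s)) := by
    have : ∑ b : B, (vb b - ∑ s ∈ Sb b, vs s)
        = (∑ b : B, (vb b - ∑ s ∈ Sb b, max (vs s) (vs' s)))
          + ∑ b : B, ∑ s ∈ Sb b, (max (vs s) (vs' s) - vs s) := by
      rw [← Finset.sum_add_distrib]
      refine Finset.sum_congr rfl (fun b _ => ?_)
      rw [Finset.sum_sub_distrib]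
      ring
    linarith
  refine step1.trans ?_
  have hsplit := Finset.sum_filter_add_sum_filter_not Finset.univ
    (fun b => ∑ s ∈ Sb b, max (vs s) (vs' s) < vb b)
    (fun b => vb b - ∑ s ∈ Sb b, max (vs s) (vs' s))
  have hnonpos : ∑ b ∈ Finset.univ.filter
      (fun b => ¬ (∑ s ∈ Sb b, max (vs s) (vs' s) < vb b)),
      (vb b - ∑ s ∈ Sb b, max (vs s) (vs' s)) ≤ 0 := by
    apply Finset.sum_nonpos
    intro b hb
    simp only [Finset.mem_filter, not_lt] at hb
    linarith [hb.2]
  linarith [hsplit]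
end
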